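/- Let I be a lower ideal of Δ(1) and let w = w_{I,min} ∈ W⁰ be the unique element with N(w) = ⟨I⟩. For γ ∈ Δ(1), one has γ ∈ max(I) (i.e., γ is a maximal element of I in the poset Δ(1)) if and only if w(γ) ∈ −Π, where Π is the set of simple roots of Δ. -/

import Mathlib

open RealInnerProductSpace

variable {V : Type*} [NormedAddCommGroup V] [InnerProductSpace ℝ V] [FiniteDimensional ℝ V]

/-- The orthogonal reflection in the hyperplane orthogonal to `α`. -/
noncomputable def sref (α : V) : V ≃ₗ[ℝ] V :=
  (Submodule.reflection ((ℝ ∙ α)ᗮ)).toLinearEquiv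

/-- `Δ` is an (irreducible, crystallographic, reduced) root system, equipped with a
`ℤ`-grading `d` (so that `Δ(i) = {γ ∈ Δ | d γ = i}`) and a compatible set `Pos = Δ⁺`
of positive roots (compatibility: every root of level `≥ 1` is positive). -/
structure GradedRootSystem (Δ : Set V) (d : V → ℤ) (Pos : Set V) : Prop where
  finite : Δ.Finite
  span_top : Submodule.span ℝ Δ = ⊤
  nonzero : ∀ α ∈ Δ, α ≠ 0
  neg_mem : ∀ α ∈ Δ, -α ∈ Δ
  reduced : ∀ α ∈ Δ, ∀ c : ℝ, c • α ∈ Δ → c = 1 ∨ c = -1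
  reflect_mem : ∀ α ∈ Δ, ∀ β ∈ Δ, β - (2 * ⟪β, α⟫ / ⟪α, α⟫) • α ∈ Δ
  crystallographic : ∀ α ∈ Δ, ∀ β ∈ Δ, ∃ n : ℤ, (n : ℝ) = 2 * ⟪β, α⟫ / ⟪α, α⟫
  irreducible : ∀ Δ₁ Δ₂ : Set V, Δ = Δ₁ ∪ Δ₂ → (∀ a ∈ Δ₁, ∀ b ∈ Δ₂, ⟪a, b⟫ = 0) →
    Δ₁ = ∅ ∨ Δ₂ = ∅
  grade_add : ∀ γ₁ ∈ Δ, ∀ γ₂ ∈ Δ, γ₁ + γ₂ ∈ Δ → d (γ₁ + γ₂) = d γ₁ + d γ₂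
  grade_neg : ∀ γ ∈ Δ, d (-γ) = - d γ
  pos_subset : Pos ⊆ Δ
  pos_iff : ∀ γ ∈ Δ, (γ ∈ Pos ↔ -γ ∉ Pos)
  pos_add : ∀ γ₁ ∈ Pos, ∀ γ₂ ∈ Pos, γ₁ + γ₂ ∈ Δ → γ₁ + γ₂ ∈ Pos
  compatible : ∀ γ ∈ Δ, 1 ≤ d γ → γ ∈ Pos

/-- The level set `Δ(i)` of the grading. -/
def level (Δ : Set V) (d : V → ℤ) (i : ℤ) : Set V := {γ ∈ Δ | d γ = i}

/-- `Δ(≥ k)`. -/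
def levelGE (Δ : Set V) (d : V → ℤ) (k : ℤ) : Set V := {γ ∈ Δ | k ≤ d γ}

/-- `Δ(≤ k)`. -/
def levelLE (Δ : Set V) (d : V → ℤ) (k : ℤ) : Set V := {γ ∈ Δ | d γ ≤ k}

/-- `Δ(0)⁺`, the positive part of `Δ(0)`. -/
def pos0 (d : V → ℤ) (Pos : Set V) : Set V := {γ ∈ Pos | d γ = 0}

/-- The simple roots of a positive system `P`: positive roots that are not the sum
of two positive roots. -/
def simpleRoots (P : Set V) : Set V := {γ ∈ P | ¬ ∃ a ∈ P, ∃ b ∈ P, γ = a + b}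

/-- `idealPow Δ I k = I^k`, with `I¹ = I` and `I^{k+1} = (I + I^k) ∩ Δ`
(and `I⁰ = ∅` by convention). -/
def idealPow (Δ I : Set V) : ℕ → Set V
  | 0 => ∅
  | 1 => I
  | (k+2) => {x ∈ Δ | ∃ a ∈ I, ∃ b ∈ idealPow Δ I (k+1), x = a + b}

/-- `⟨I⟩ = ⋃_{k ≥ 1} I^k`. -/
def gen (Δ I : Set V) : Set V := ⋃ k : ℕ, idealPow Δ I (k+1)

/-- A subset `M` of roots is closed if it is closed under root addition. -/
def IsClosedSubset (Δ M : Set V) : Prop :=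
  ∀ γ₁ ∈ M, ∀ γ₂ ∈ M, γ₁ + γ₂ ∈ Δ → γ₁ + γ₂ ∈ M

/-- Bi-convexity of `M ⊆ Δ⁺`: both `M` and `Δ⁺ \ M` are closed. -/
def IsBiConvex (Δ Pos M : Set V) : Prop :=
  IsClosedSubset Δ M ∧ IsClosedSubset Δ (Pos \ M)

/-- The partial order on each level `Δ(i)`: `γ' ≼ γ` iff `γ - γ'` is a nonnegative
integral combination of the simple roots `Π(0)` of `Δ(0)⁺`. -/
def leLevel (d : V → ℤ) (Pos : Set V) (γ' γ : V) : Prop :=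
  γ - γ' ∈ AddSubmonoid.closure (simpleRoots (pos0 d Pos))

/-- A lower ideal of the weight poset `Δ(i)`. -/
def IsLowerIdeal (Δ : Set V) (d : V → ℤ) (Pos : Set V) (i : ℤ) (I : Set V) : Prop :=
  I ⊆ level Δ d i ∧ ∀ γ ∈ I, ∀ ν ∈ level Δ d i, leLevel d Pos ν γ → ν ∈ I

/-- An upper ideal of the weight poset `Δ(i)`. -/
def IsUpperIdeal (Δ : Set V) (d : V → ℤ) (Pos : Set V) (i : ℤ) (I : Set V) : Prop :=
  I ⊆ level Δ d i ∧ ∀ γ ∈ I, ∀ ν ∈ level Δ d i, leLevel d Pos γ ν → ν ∈ I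

/-- The Weyl group of the set of roots `S`: the subgroup of `GL(V)` generated by the
reflections `s_α`, `α ∈ S`. -/
noncomputable def weyl (S : Set V) : Subgroup (V ≃ₗ[ℝ] V) :=
  Subgroup.closure {g | ∃ α ∈ S, g = sref α}

/-- The inversion set `N(w) = {γ ∈ Δ⁺ | -w(γ) ∈ Δ⁺}`. -/
def invSet (Pos : Set V) (w : V ≃ₗ[ℝ] V) : Set V := {γ ∈ Pos | -(w γ) ∈ Pos}

/-- `W⁰`, the minimal length coset representatives of `W/W(0)`:
elements of `W` sending `Δ(0)⁺` into `Δ⁺`. -/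
noncomputable def W0 (Δ : Set V) (d : V → ℤ) (Pos : Set V) : Set (V ≃ₗ[ℝ] V) :=
  {w | w ∈ weyl Δ ∧ ∀ γ ∈ pos0 d Pos, w γ ∈ Pos}


/- ======================= Auxiliary development ======================= -/

set_option linter.unusedSectionVars false
set_option maxHeartbeats 1000000

theorem sref_apply (α β : V) : sref α β = β - (2 * ⟪β, α⟫ / ⟪α, α⟫) • α := by
  have h1 : Submodule.starProjection (ℝ ∙ α) β + Submodule.starProjection (ℝ ∙ α)ᗮ β = β :=
    Submodule.starProjection_add_starProjection_orthogonal (K := ℝ ∙ α) β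
  have h2 : Submodule.starProjection (ℝ ∙ α) β = (⟪α, β⟫ / ((‖α‖:ℝ) ^ 2)) • α :=
    Submodule.starProjection_singleton ℝ β
  have h3 : sref α β = 2 • Submodule.starProjection (ℝ ∙ α)ᗮ β - β := by
    simp [sref, Submodule.reflection_apply]
  rw [h3, ← sub_eq_of_eq_add' h1.symm, h2]
  rw [real_inner_comm α β, ← real_inner_self_eq_norm_sq]
  match_scalars <;> ring

theorem sref_sref (α β : V) : sref α (sref α β) = β := by simp [sref]

theorem sref_inv (α : V) : (sref α)⁻¹ = sref α :=
  (eq_inv_of_mul_eq_one_left (LinearEquiv.ext fun x => sref_sref α x)).symm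

/-- extract a list from membership in an `AddSubmonoid.closure`. -/
theorem mem_closure_list {S : Set V} {v : V} (hv : v ∈ AddSubmonoid.closure S) :
    ∃ l : List V, (∀ x ∈ l, x ∈ S) ∧ l.sum = v := by
  induction hv using AddSubmonoid.closure_induction with
  | mem x hx => exact ⟨[x], by simp [hx]⟩
  | zero => exact ⟨[], by simp⟩
  | add x y hx hy ihx ihy =>
    obtain ⟨l₁, hl₁, hs₁⟩ := ihx
    obtain ⟨l₂, hl₂, hs₂⟩ := ihy
    exact ⟨l₁ ++ l₂, by
      constructor
      · intro z hz; rcases List.mem_append.mp hz with h' | h'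
        · exact hl₁ z h'
        · exact hl₂ z h'
      · rw [List.sum_append, hs₁, hs₂]⟩

theorem exists_inner_neg (p : V) :
    ∀ l : List V, ⟪p, l.sum⟫ < 0 → ∃ q ∈ l, ⟪p, q⟫ < 0 := by
  intro l
  induction l with
  | nil => intro hs; simp [inner_zero_right] at hs
  | cons q t ih =>
    intro hs
    rw [List.sum_cons, inner_add_right] at hs
    by_cases h1 : ⟪p, q⟫ < 0
    · exact ⟨q, List.mem_cons_self, h1⟩
    · have h2 : ⟪p, t.sum⟫ < 0 := by push_neg at h1; linarith
      obtain ⟨q', hq', h3⟩ := ih h2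
      exact ⟨q', List.mem_cons_of_mem q hq', h3⟩

namespace GradedRootSystem

variable {Δ : Set V} {d : V → ℤ} {Pos : Set V} {I : Set V}

theorem inner_self_pos' (h : GradedRootSystem Δ d Pos) {α : V} (hα : α ∈ Δ) :
    (0:ℝ) < ⟪α, α⟫ :=
  lt_of_le_of_ne real_inner_self_nonneg (Ne.symm (inner_self_ne_zero.mpr (h.nonzero α hα)))

/-- Key root-addition lemma: roots at an obtuse angle sum to a root (or zero). -/
theorem root_add (h : GradedRootSystem Δ d Pos) {α β : V} (hα : α ∈ Δ) (hβ : β ∈ Δ)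
    (hip : ⟪α, β⟫ < 0) (hne : α + β ≠ 0) : α + β ∈ Δ := by
  have hA := h.inner_self_pos' hα
  have hB := h.inner_self_pos' hβ
  by_cases hdep : ‖(-β)‖ • α = ‖α‖ • (-β)
  · -- dependent case : β is a negative multiple of α
    have hα0 : ‖α‖ ≠ 0 := norm_ne_zero_iff.mpr (h.nonzero α hα)
    have hc : (-(‖β‖ / ‖α‖)) • α = β := by
      have h5 : ‖β‖ • α = ‖α‖ • (-β) := by simpa using hdep
      have h6 : (‖α‖⁻¹ * ‖β‖) • α = -β := by
        rw [mul_smul, h5, ← mul_smul, inv_mul_cancel₀ hα0, one_smul]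
      rw [neg_smul, div_eq_inv_mul, h6, neg_neg]
    rcases h.reduced α hα _ (hc ▸ hβ) with h1 | h1
    · exfalso
      have : β = (1:ℝ) • α := by rw [← h1, hc]
      rw [this] at hip; rw [one_smul] at hip
      rw [real_inner_comm] at hip; linarith
    · have : β = -α := by rw [← hc, h1, neg_one_smul]
      exact absurd (by rw [this, add_neg_cancel]) hne
  · -- independent case: strict Cauchy-Schwarz
    have hcs : ⟪α, -β⟫ < ‖α‖ * ‖(-β)‖ := inner_lt_norm_mul_iff_real.mpr hdep
    have hcs2 : ⟪α, β⟫ * ⟪α, β⟫ < ⟪α, α⟫ * ⟪β, β⟫ := by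
      have h1 : ⟪α, -β⟫ = -⟪α, β⟫ := inner_neg_right α β
      have h2 : ⟪α, α⟫ = ‖α‖ ^ 2 := real_inner_self_eq_norm_sq α
      have h3 : ⟪β, β⟫ = ‖β‖ ^ 2 := real_inner_self_eq_norm_sq β
      have h4 : ‖(-β)‖ = ‖β‖ := norm_neg β
      rw [h4] at hcs; rw [h1] at hcs
      nlinarith [norm_nonneg α, norm_nonneg β]
    obtain ⟨n, hn⟩ := h.crystallographic α hα β hβ
    obtain ⟨m, hm⟩ := h.crystallographic β hβ α hα
    have hco : ⟪β, α⟫ = ⟪α, β⟫ := real_inner_comm α β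
    have hnR : (n:ℝ) < 0 := by
      rw [hn]; apply div_neg_of_neg_of_pos _ hA; rw [hco]; linarith
    have hmR : (m:ℝ) < 0 := by
      rw [hm]; apply div_neg_of_neg_of_pos _ hB; linarith
    have hprodR : (n:ℝ) * m < 4 := by
      rw [hn, hm, div_mul_div_comm, div_lt_iff₀ (by positivity)]
      rw [hco]; nlinarith
    have hkey : n = -1 ∨ m = -1 := by
      have h1 : n < 0 := by exact_mod_cast hnR
      have h2 : m < 0 := by exact_mod_cast hmR
      have h3 : n * m < 4 := by exact_mod_cast hprodR
      by_contra hc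
      push_neg at hc
      have h4 : n ≤ -2 := by omega
      have h5 : m ≤ -2 := by omega
      nlinarith
    rcases hkey with hk | hk
    · have hval : 2 * ⟪β, α⟫ / ⟪α, α⟫ = (-1:ℝ) := by
        rw [← hn, hk]; push_cast; ring
      have := h.reflect_mem α hα β hβ
      rw [hval] at this
      rw [neg_one_smul, sub_neg_eq_add, add_comm] at this
      exact this
    · have hval : 2 * ⟪α, β⟫ / ⟪β, β⟫ = (-1:ℝ) := by
        rw [← hm, hk]; push_cast; ring
      have := h.reflect_mem β hβ α hα
      rw [hval] at this
      rw [neg_one_smul, sub_neg_eq_add] at this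
      exact this

/-- the Weyl group of `Δ` stabilizes `Δ`. -/
theorem weyl_maps (h : GradedRootSystem Δ d Pos) {g : V ≃ₗ[ℝ] V} (hg : g ∈ weyl Δ) :
    (∀ α ∈ Δ, g α ∈ Δ) ∧ (∀ α ∈ Δ, g.symm α ∈ Δ) := by
  have hg' : g ∈ Subgroup.closure {g : V ≃ₗ[ℝ] V | ∃ α ∈ Δ, g = sref α} := hg
  clear hg
  induction hg' using Subgroup.closure_induction with
  | mem x hx =>
    obtain ⟨β, hβ, rfl⟩ := hx
    constructor
    · intro α hα; rw [sref_apply]; exact h.reflect_mem β hβ α hα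
    · intro α hα
      have hss : (sref β).symm = sref β := sref_inv β
      rw [hss, sref_apply]; exact h.reflect_mem β hβ α hα
  | one =>
    constructor <;> intro α hα <;> exact hα
  | mul x y hx hy ihx ihy =>
    constructor
    · intro α hα
      have hxy : (x * y) α = x (y α) := rfl
      rw [hxy]; exact ihx.1 _ (ihy.1 _ hα)
    · intro α hα
      have hxy : (x * y).symm α = y.symm (x.symm α) := rfl
      rw [hxy]; exact ihy.2 _ (ihx.2 _ hα)
  | inv x hx ihx =>
    constructor
    · intro α hα; exact ihx.2 α hα
    · intro α hα
      show x.symm.symm α ∈ Δ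
      rw [LinearEquiv.symm_symm]; exact ihx.1 α hα

/-- A nonempty list of positive roots has nonzero sum. -/
theorem sum_ne_zero (h : GradedRootSystem Δ d Pos) :
    ∀ (n : ℕ) (l : List V), l.length = n → (∀ x ∈ l, x ∈ Pos) → l ≠ [] → l.sum ≠ 0 := by
  classical
  intro n
  induction n using Nat.strong_induction_on with
  | _ n ih =>
  intro l hlen hmem hne hsum
  cases l with
  | nil => exact hne rfl
  | cons p rest =>
    have hp : p ∈ Pos := hmem p (List.mem_cons_self)
    have hpΔ : p ∈ Δ := h.pos_subset hp
    by_cases hr : rest = []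
    · subst hr
      simp at hsum
      exact h.nonzero p hpΔ hsum
    · have hps : p + rest.sum = 0 := by rw [List.sum_cons] at hsum; exact hsum
      have hsum' : rest.sum = -p := eq_neg_of_add_eq_zero_right hps
      have hip : ⟪p, rest.sum⟫ < 0 := by
        rw [hsum', inner_neg_right]
        linarith [h.inner_self_pos' hpΔ]
      obtain ⟨q, hq, hpq⟩ := exists_inner_neg p rest hip
      have hqPos : q ∈ Pos := hmem q (List.mem_cons_of_mem p hq)
      have hqΔ : q ∈ Δ := h.pos_subset hqPos
      have hne2 : p + q ≠ 0 := by
        intro h0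
        have hq' : q = -p := eq_neg_of_add_eq_zero_right h0
        rw [hq'] at hqPos
        exact (h.pos_iff p hpΔ).mp hp hqPos
      have hpqΔ : p + q ∈ Δ := h.root_add hpΔ hqΔ hpq hne2
      have hpqPos : p + q ∈ Pos := h.pos_add p hp q hqPos hpqΔ
      have hperm : rest.Perm (q :: rest.erase q) := List.perm_cons_erase hq
      have hrsum : rest.sum = q + (rest.erase q).sum := by
        rw [hperm.sum_eq, List.sum_cons]
      have hlq : rest.length = (rest.erase q).length + 1 := by
        have h1 := List.length_erase_of_mem hq
        have h2 : 1 ≤ rest.length := List.length_pos_iff.mpr (List.ne_nil_of_mem hq)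
        omega
      have hlt : rest.length < n := by
        rw [← hlen]; simp
      refine ih rest.length hlt ((p + q) :: rest.erase q) (by simp [hlq]) ?_ (by simp) ?_
      · intro x hx
        rcases List.mem_cons.mp hx with rfl | hx'
        · exact hpqPos
        · exact hmem x (List.mem_cons_of_mem p (List.mem_of_mem_erase hx'))
      · rw [List.sum_cons, add_assoc, ← hrsum]
        exact hps

end GradedRootSystem

/-- auxiliary strict "smaller" relation used for induction over `pos0`. -/
def lt0 (d : V → ℤ) (Pos : Set V) (a b : V) : Prop :=
  b - a ∈ AddSubmonoid.closure (pos0 d Pos) ∧ b - a ≠ 0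

namespace GradedRootSystem

variable {Δ : Set V} {d : V → ℤ} {Pos : Set V} {I : Set V}

theorem lt0_trans (h : GradedRootSystem Δ d Pos) {a b c : V}
    (h1 : lt0 d Pos a b) (h2 : lt0 d Pos b c) : lt0 d Pos a c := by
  constructor
  · have h3 : (b - a) + (c - b) = c - a := by abel
    rw [← h3]; exact add_mem h1.1 h2.1
  · intro h0
    obtain ⟨l₁, hl₁, hs₁⟩ := mem_closure_list h1.1
    obtain ⟨l₂, hl₂, hs₂⟩ := mem_closure_list h2.1
    have hl1ne : l₁ ≠ [] := by
      intro hh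
      apply h1.2
      rw [hh] at hs₁
      simpa using hs₁.symm
    have hca : c = a := by
      have := sub_eq_zero.mp h0; exact this
    have hsum : (l₁ ++ l₂).sum = 0 := by
      rw [List.sum_append, hs₁, hs₂, hca]; abel
    refine h.sum_ne_zero (l₁ ++ l₂).length (l₁ ++ l₂) rfl ?_ ?_ hsum
    · intro x hx
      rcases List.mem_append.mp hx with h' | h'
      · exact (hl₁ x h').1
      · exact (hl₂ x h').1
    · simp [hl1ne]

theorem pos0_mem_closure_simple (h : GradedRootSystem Δ d Pos) :
    ∀ p ∈ pos0 d Pos, p ∈ AddSubmonoid.closure (simpleRoots (pos0 d Pos)) := by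
  classical
  have hfin : (pos0 d Pos).Finite := h.finite.subset fun x hx => h.pos_subset hx.1
  suffices key : ∀ (n : ℕ), ∀ p ∈ pos0 d Pos,
      ({q ∈ pos0 d Pos | lt0 d Pos q p}.ncard ≤ n) →
      p ∈ AddSubmonoid.closure (simpleRoots (pos0 d Pos)) by
    exact fun p hp => key _ p hp le_rfl
  have hfin2 : ∀ p : V, {q ∈ pos0 d Pos | lt0 d Pos q p}.Finite :=
    fun p => hfin.subset fun x hx => hx.1
  have hdec : ∀ p ∈ pos0 d Pos, p ∉ simpleRoots (pos0 d Pos) →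
      ∃ a ∈ pos0 d Pos, ∃ b ∈ pos0 d Pos, p = a + b := by
    intro p hp hs
    by_contra hno; exact hs ⟨hp, hno⟩
  have hlt : ∀ a ∈ pos0 d Pos, ∀ b ∈ pos0 d Pos, ∀ p, p = a + b → lt0 d Pos a p := by
    intro a ha b hb p hp
    constructor
    · have h9 : p - a = b := by rw [hp]; abel
      rw [h9]; exact AddSubmonoid.subset_closure hb
    · have h9 : p - a = b := by rw [hp]; abel
      rw [h9]; exact h.nonzero b (h.pos_subset hb.1)
  have hstep : ∀ p, ∀ x ∈ pos0 d Pos, lt0 d Pos x p →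
      {q ∈ pos0 d Pos | lt0 d Pos q x}.ncard < {q ∈ pos0 d Pos | lt0 d Pos q p}.ncard := by
    intro p x hx hxp
    apply Set.ncard_lt_ncard _ (hfin2 p)
    have hsub : {q ∈ pos0 d Pos | lt0 d Pos q x} ⊆ {q ∈ pos0 d Pos | lt0 d Pos q p} :=
      fun y hy => ⟨hy.1, h.lt0_trans hy.2 hxp⟩
    rw [Set.ssubset_iff_of_subset hsub]
    refine ⟨x, ⟨hx, hxp⟩, fun hmem => ?_⟩
    exact hmem.2.2 (by simp)
  intro n
  induction n with
  | zero =>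
    intro p hp hc
    by_cases hs : p ∈ simpleRoots (pos0 d Pos)
    · exact AddSubmonoid.subset_closure hs
    · exfalso
      obtain ⟨a, ha, b, hb, hab⟩ := hdec p hp hs
      have h1 := hstep p a ha (hlt a ha b hb p hab)
      omega
  | succ n ih =>
    intro p hp hc
    by_cases hs : p ∈ simpleRoots (pos0 d Pos)
    · exact AddSubmonoid.subset_closure hs
    · obtain ⟨a, ha, b, hb, hab⟩ := hdec p hp hs
      have hltb : lt0 d Pos b p := by
        apply hlt b hb a ha p
        rw [hab]; abel
      have h1 := hstep p a ha (hlt a ha b hb p hab)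
      have h2 := hstep p b hb hltb
      have ha' := ih a ha (by omega)
      have hb' := ih b hb (by omega)
      rw [hab]; exact add_mem ha' hb'

theorem idealPow_level (h : GradedRootSystem Δ d Pos) (hI : IsLowerIdeal Δ d Pos 1 I) :
    ∀ k, ∀ x ∈ idealPow Δ I (k+1), x ∈ Δ ∧ d x = (k:ℤ) + 1 := by
  intro k
  induction k with
  | zero =>
    intro x hx
    have hx' : x ∈ I := hx
    have h1 := hI.1 hx'
    exact ⟨h1.1, by simpa using h1.2⟩
  | succ k ih =>
    intro x hx
    obtain ⟨hxΔ, a, ha, b, hb, hxab⟩ := hx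
    have haL := hI.1 ha
    obtain ⟨hbΔ, hdb⟩ := ih b hb
    subst hxab
    refine ⟨hxΔ, ?_⟩
    rw [h.grade_add a haL.1 b hbΔ hxΔ, haL.2, hdb]
    push_cast; ring

end GradedRootSystem

namespace GradedRootSystem

variable {Δ : Set V} {d : V → ℤ} {Pos : Set V} {I : Set V}

theorem lemQ (h : GradedRootSystem Δ d Pos) (hI : IsLowerIdeal Δ d Pos 1 I)
    {w : V ≃ₗ[ℝ] V} (hw : w ∈ W0 Δ d Pos) (hN : invSet Pos w = gen Δ I) :
    ∀ k : ℕ, ∀ γ α η : V, γ ∈ I → (∀ ν ∈ I, leLevel d Pos γ ν → ν = γ) →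
      α ∈ idealPow Δ I (k+1) → η ∈ Δ → w η ∈ Pos → γ + η = α → False := by
  have hwW := h.weyl_maps hw.1
  have wmap : ∀ α ∈ Δ, w α ∈ Δ := hwW.1
  have hgen : ∀ x ∈ gen Δ I, x ∈ Pos ∧ -(w x) ∈ Pos := fun x hx => by
    rw [← hN] at hx; exact ⟨hx.1, hx.2⟩
  have hIsub : I ⊆ gen Δ I := fun x hx => Set.mem_iUnion.mpr ⟨0, hx⟩
  have hIfact : ∀ ν ∈ I, ν ∈ Δ ∧ d ν = 1 := fun ν hν => ⟨(hI.1 hν).1, (hI.1 hν).2⟩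
  have hIinv : ∀ ν ∈ I, -(w ν) ∈ Pos := fun ν hν => (hgen ν (hIsub hν)).2
  have hnoboth : ∀ x ∈ Δ, x ∈ Pos → -x ∈ Pos → False := fun x hx h1 h2 =>
    (h.pos_iff x hx).mp h1 h2
  have hposx : ∀ x ∈ Δ, x ∉ Pos → -x ∈ Pos := fun x hx h1 =>
    not_not.mp (fun h2 => h1 ((h.pos_iff x hx).mpr h2))
  have hW0 : ∀ σ ∈ pos0 d Pos, w σ ∈ Pos := hw.2
  have hclos := h.pos0_mem_closure_simple
  intro k
  induction k with
  | zero =>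
    intro γ' α η hγ'I hmax hα hηΔ hwη hsum
    have hαI : α ∈ I := hα
    have hγ'Δ := (hIfact γ' hγ'I).1
    have hαΔ := (hIfact α hαI).1
    have hdη : d η = 0 := by
      have h9 := h.grade_add γ' hγ'Δ η hηΔ (hsum ▸ hαΔ)
      rw [hsum, (hIfact α hαI).2, (hIfact γ' hγ'I).2] at h9
      omega
    by_cases hηP : η ∈ Pos
    · have hη0 : η ∈ pos0 d Pos := ⟨hηP, hdη⟩
      have hle : leLevel d Pos γ' α := by
        show α - γ' ∈ _
        have h9 : α - γ' = η := by rw [← hsum]; abel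
        rw [h9]; exact hclos η hη0
      have h10 := hmax α hαI hle
      apply h.nonzero η hηΔ
      have h11 : γ' + η = γ' + 0 := by rw [add_zero, hsum, h10]
      exact add_left_cancel h11
    · have hnη : -η ∈ Pos := hposx η hηΔ hηP
      have hnη0 : -η ∈ pos0 d Pos := ⟨hnη, by rw [h.grade_neg η hηΔ, hdη]; ring⟩
      have h9 := hW0 _ hnη0
      rw [map_neg] at h9
      exact hnoboth (w η) (wmap η hηΔ) hwη h9
  | succ k ih =>
    intro γ' α η hγ'I hmax hα hηΔ hwη hsum
    obtain ⟨hαΔ, δ, hδI, ε, hε, hαde⟩ := hα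
    have hγ'Δ := (hIfact γ' hγ'I).1
    have hδΔ := (hIfact δ hδI).1
    obtain ⟨hεΔ, hdε⟩ := h.idealPow_level hI k ε hε
    have hεgen : ε ∈ gen Δ I := Set.mem_iUnion.mpr ⟨k, hε⟩
    have hεinv : -(w ε) ∈ Pos := (hgen ε hεgen).2
    have hδinv : -(w δ) ∈ Pos := hIinv δ hδI
    have heq : γ' + η = δ + ε := by rw [hsum, hαde]
    have hη' : η = δ + ε - γ' := by rw [← heq]; abel
    -- at least one of four inner products is positive
    have hpos4 : 0 < ⟪δ, γ'⟫ ∨ 0 < ⟪δ, η⟫ ∨ 0 < ⟪ε, γ'⟫ ∨ 0 < ⟪ε, η⟫ := by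
      by_contra hcon
      push_neg at hcon
      obtain ⟨h1, h2, h3, h4⟩ := hcon
      have h5 : (0:ℝ) < ⟪α, α⟫ := h.inner_self_pos' hαΔ
      have h6 : ⟪α, α⟫ = ⟪δ, γ'⟫ + ⟪δ, η⟫ + ⟪ε, γ'⟫ + ⟪ε, η⟫ := by
        rw [hαde]
        nth_rewrite 2 [← heq]
        rw [inner_add_left, inner_add_right, inner_add_right]
        ring
      rw [h6] at h5; linarith
    by_cases hγδ : γ' = δ
    · have hηε : η = ε := by
        have h9 := heq
        rw [← hγδ] at h9
        exact add_left_cancel h9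
      rw [hηε] at hwη
      exact hnoboth (w ε) (wmap ε hεΔ) hwη hεinv
    by_cases hδη : δ = η
    · rw [← hδη] at hwη
      exact hnoboth (w δ) (wmap δ hδΔ) hwη hδinv
    -- τ-branch : γ' - δ a root gives a contradiction
    have hτbranch : γ' - δ ∈ Δ → False := by
      intro hτΔ
      have h7 : δ + (γ' - δ) = γ' := by abel
      have hdτ : d (γ' - δ) = 0 := by
        have h9 := h.grade_add δ hδΔ (γ' - δ) hτΔ (by rw [h7]; exact hγ'Δ)
        rw [h7, (hIfact γ' hγ'I).2, (hIfact δ hδI).2] at h9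
        omega
      by_cases hτP : γ' - δ ∈ Pos
      · have hτ0 : γ' - δ ∈ pos0 d Pos := ⟨hτP, hdτ⟩
        have hwτ : w (γ' - δ) ∈ Pos := hW0 _ hτ0
        have hkey : -(w η) = -(w ε) + w (γ' - δ) := by
          rw [hη', map_sub, map_add, map_sub]; abel
        have hnηΔ : -(w η) ∈ Δ := by rw [← map_neg]; exact wmap _ (h.neg_mem η hηΔ)
        have h9 : -(w η) ∈ Pos := by
          rw [hkey]; exact h.pos_add _ hεinv _ hwτ (hkey ▸ hnηΔ)
        exact hnoboth (w η) (wmap η hηΔ) hwη h9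
      · have hτn : -(γ' - δ) ∈ Pos := hposx _ hτΔ hτP
        have hτ0 : -(γ' - δ) ∈ pos0 d Pos :=
          ⟨hτn, by rw [h.grade_neg _ hτΔ, hdτ]; ring⟩
        have hle : leLevel d Pos γ' δ := by
          show δ - γ' ∈ _
          have h9 : δ - γ' = -(γ' - δ) := by abel
          rw [h9]; exact hclos _ hτ0
        exact hγδ ((hmax δ hδI hle).symm)
    -- ν-branch : η - δ a root lets us descend
    have hνbranch : η - δ ∈ Δ → False := by
      intro hνΔ
      have h8 : w (η - δ) = w η + -(w δ) := by rw [map_sub]; abel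
      have hwν : w (η - δ) ∈ Pos := by
        rw [h8]
        exact h.pos_add _ hwη _ hδinv (by rw [← h8]; exact wmap _ hνΔ)
      have hsum2 : γ' + (η - δ) = ε := by rw [hη']; abel
      exact ih γ' ε (η - δ) hγ'I hmax hε hνΔ hwν hsum2
    rcases hpos4 with h1 | h1 | h1 | h1
    · apply hτbranch
      have h2 : ⟪γ', -δ⟫ < 0 := by rw [inner_neg_right, real_inner_comm]; linarith
      have h3 : γ' + -δ ≠ 0 := by
        intro h0
        apply hγδ
        rw [← sub_eq_add_neg] at h0
        exact sub_eq_zero.mp h0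
      have h4 := h.root_add hγ'Δ (h.neg_mem δ hδΔ) h2 h3
      rwa [← sub_eq_add_neg] at h4
    · apply hνbranch
      have h2 : ⟪η, -δ⟫ < 0 := by rw [inner_neg_right, real_inner_comm]; linarith
      have h3 : η + -δ ≠ 0 := by
        intro h0
        apply hδη
        rw [← sub_eq_add_neg] at h0
        exact (sub_eq_zero.mp h0).symm
      have h4 := h.root_add hηΔ (h.neg_mem δ hδΔ) h2 h3
      rwa [← sub_eq_add_neg] at h4
    · apply hνbranch
      have h2 : ⟪ε, -γ'⟫ < 0 := by rw [inner_neg_right]; linarith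
      have h3 : ε + -γ' ≠ 0 := by
        intro h0
        apply hδη
        rw [← sub_eq_add_neg] at h0
        have h9 : ε = γ' := sub_eq_zero.mp h0
        rw [h9, add_comm δ γ'] at heq
        exact (add_left_cancel heq).symm
      have h4 := h.root_add hεΔ (h.neg_mem γ' hγ'Δ) h2 h3
      have h5 : ε + -γ' = η - δ := by rw [hη']; abel
      rwa [h5] at h4
    · apply hτbranch
      have h2 : ⟪ε, -η⟫ < 0 := by rw [inner_neg_right]; linarith
      have h3 : ε + -η ≠ 0 := by
        intro h0
        apply hγδ
        rw [← sub_eq_add_neg] at h0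
        have h9 : ε = η := sub_eq_zero.mp h0
        rw [← h9] at heq
        have h10 : γ' + ε = δ + ε := heq
        exact add_right_cancel h10
      have h4 := h.root_add hεΔ (h.neg_mem η hηΔ) h2 h3
      have h5 : ε + -η = γ' - δ := by rw [hη']; abel
      rwa [h5] at h4

end GradedRootSystem
/-- If `w = w_{I,min}` (the element of `W⁰` with `N(w) = ⟨I⟩`), then for `γ ∈ Δ(1)`,
`γ` is a maximal element of `I` iff `w(γ) ∈ -Π`. -/
theorem stmt7 (Δ : Set V) (d : V → ℤ) (Pos : Set V)
    (h : GradedRootSystem Δ d Pos) (I : Set V)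
    (hI : IsLowerIdeal Δ d Pos 1 I)
    (w : V ≃ₗ[ℝ] V) (hw : w ∈ W0 Δ d Pos) (hN : invSet Pos w = gen Δ I) :
    ∀ γ ∈ level Δ d 1,
      ((γ ∈ I ∧ ∀ ν ∈ I, leLevel d Pos γ ν → ν = γ) ↔ -(w γ) ∈ simpleRoots Pos) := by
  classical
  intro γ hγL
  obtain ⟨hγΔ, hdγ⟩ := hγL
  have hwW := h.weyl_maps hw.1
  have wmap : ∀ α ∈ Δ, w α ∈ Δ := hwW.1
  have winv : ∀ α ∈ Δ, w.symm α ∈ Δ := hwW.2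
  have hgen : ∀ x ∈ gen Δ I, x ∈ Pos ∧ -(w x) ∈ Pos := fun x hx => by
    rw [← hN] at hx; exact ⟨hx.1, hx.2⟩
  have hIsub : I ⊆ gen Δ I := fun x hx => Set.mem_iUnion.mpr ⟨0, hx⟩
  have hIfact : ∀ ν ∈ I, ν ∈ Δ ∧ d ν = 1 := fun ν hν => ⟨(hI.1 hν).1, (hI.1 hν).2⟩
  have hIinv : ∀ ν ∈ I, -(w ν) ∈ Pos := fun ν hν => (hgen ν (hIsub hν)).2
  have hIPos : ∀ ν ∈ I, ν ∈ Pos := fun ν hν => (hgen ν (hIsub hν)).1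
  have hnoboth : ∀ x ∈ Δ, x ∈ Pos → -x ∈ Pos → False := fun x hx h1 h2 =>
    (h.pos_iff x hx).mp h1 h2
  have hposx : ∀ x ∈ Δ, x ∉ Pos → -x ∈ Pos := fun x hx h1 =>
    not_not.mp (fun h2 => h1 ((h.pos_iff x hx).mpr h2))
  have hW0 : ∀ σ ∈ pos0 d Pos, w σ ∈ Pos := hw.2
  have hgenlev : ∀ x ∈ gen Δ I, ∃ k : ℕ, x ∈ idealPow Δ I (k+1) ∧ d x = (k:ℤ)+1 := by
    intro x hx
    obtain ⟨k, hk⟩ := Set.mem_iUnion.mp hx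
    exact ⟨k, hk, (h.idealPow_level hI k x hk).2⟩
  have hgen1 : ∀ x ∈ gen Δ I, d x = 1 → x ∈ I := by
    intro x hx hdx
    obtain ⟨k, hk, hdk⟩ := hgenlev x hx
    have hk0 : k = 0 := by omega
    rw [hk0] at hk
    exact hk
  constructor
  · rintro ⟨hγI, hmax⟩
    refine ⟨(hgen γ (hIsub hγI)).2, ?_⟩
    rintro ⟨a, ha, b, hb, hab⟩
    have huΔ : -(w.symm a) ∈ Δ := h.neg_mem _ (winv a (h.pos_subset ha))
    have hvΔ : -(w.symm b) ∈ Δ := h.neg_mem _ (winv b (h.pos_subset hb))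
    set u := -(w.symm a) with hu
    set v := -(w.symm b) with hv
    have hwu : w u = -a := by rw [hu, map_neg, LinearEquiv.apply_symm_apply]
    have hwv : w v = -b := by rw [hv, map_neg, LinearEquiv.apply_symm_apply]
    have hwγ : w γ = -(a + b) := by
      have := congrArg Neg.neg hab
      rwa [neg_neg] at this
    have hγuv : γ = u + v := by
      apply w.injective
      rw [map_add, hwu, hwv, hwγ]
      abel
    by_cases hup : u ∈ Pos <;> by_cases hvp : v ∈ Pos
    · -- both positive : impossible by levels
      have hugen : u ∈ gen Δ I := by
        rw [← hN]; exact ⟨hup, by rw [hwu, neg_neg]; exact ha⟩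
      have hvgen : v ∈ gen Δ I := by
        rw [← hN]; exact ⟨hvp, by rw [hwv, neg_neg]; exact hb⟩
      obtain ⟨k₁, _, hdu⟩ := hgenlev u hugen
      obtain ⟨k₂, _, hdv⟩ := hgenlev v hvgen
      have h9 : d γ = d u + d v := by
        rw [hγuv]; exact h.grade_add u huΔ v hvΔ (hγuv ▸ hγΔ)
      rw [hdγ, hdu, hdv] at h9
      omega
    · -- u positive, v negative : main lemma with η := -v
      have hugen : u ∈ gen Δ I := by
        rw [← hN]; exact ⟨hup, by rw [hwu, neg_neg]; exact ha⟩
      obtain ⟨k₁, hk₁, _⟩ := hgenlev u hugen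
      have hηΔ : -v ∈ Δ := h.neg_mem v hvΔ
      have hwη : w (-v) ∈ Pos := by rw [map_neg, hwv, neg_neg]; exact hb
      have hsum : γ + -v = u := by rw [hγuv]; abel
      exact h.lemQ hI hw hN k₁ γ u (-v) hγI hmax hk₁ hηΔ hwη hsum
    · -- v positive, u negative : main lemma with η := -u
      have hvgen : v ∈ gen Δ I := by
        rw [← hN]; exact ⟨hvp, by rw [hwv, neg_neg]; exact hb⟩
      obtain ⟨k₂, hk₂, _⟩ := hgenlev v hvgen
      have hηΔ : -u ∈ Δ := h.neg_mem u huΔ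
      have hwη : w (-u) ∈ Pos := by rw [map_neg, hwu, neg_neg]; exact ha
      have hsum : γ + -u = v := by rw [hγuv]; abel
      exact h.lemQ hI hw hN k₂ γ v (-u) hγI hmax hk₂ hηΔ hwη hsum
    · -- both negative : γ would be a negative root
      have hnu : -u ∈ Pos := hposx u huΔ hup
      have hnv : -v ∈ Pos := hposx v hvΔ hvp
      have hnγ : -γ ∈ Δ := h.neg_mem γ hγΔ
      have h9 : -γ = -u + -v := by rw [hγuv]; abel
      have h10 : -γ ∈ Pos := by
        rw [h9]; exact h.pos_add _ hnu _ hnv (by rw [← h9]; exact hnγ)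
      exact hnoboth γ hγΔ (hIPos γ hγI) h10
  · intro hsimple
    have hγP : γ ∈ Pos := h.compatible γ hγΔ (by omega)
    have hγgen : γ ∈ gen Δ I := by rw [← hN]; exact ⟨hγP, hsimple.1⟩
    have hγI : γ ∈ I := hgen1 γ hγgen hdγ
    refine ⟨hγI, ?_⟩
    have hC : ∀ m : ℕ, ∀ ν : V, ∀ l : List V, ν ∈ I →
        (∀ σ ∈ l, σ ∈ simpleRoots (pos0 d Pos)) →
        l.length = m + 1 → ν = γ + l.sum → False := by
      intro m
      induction m with
      | zero =>
        intro ν l hνI hl hlen hνsum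
        obtain ⟨σ, rfl⟩ : ∃ σ, l = [σ] := by
          cases l with
          | nil => simp at hlen
          | cons a t =>
            cases t with
            | nil => exact ⟨a, rfl⟩
            | cons b t' => simp at hlen
        have hσ : σ ∈ simpleRoots (pos0 d Pos) := hl σ (by simp)
        have hwσ : w σ ∈ Pos := hW0 σ hσ.1
        have hνsum' : ν = γ + σ := by simpa using hνsum
        apply hsimple.2
        refine ⟨-(w ν), hIinv ν hνI, w σ, hwσ, ?_⟩
        rw [hνsum', map_add]; abel
      | succ m ih =>
        intro ν l hνI hl hlen hνsum
        have hlne : l ≠ [] := by intro h0; rw [h0] at hlen; simp at hlen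
        have hlPos : ∀ x ∈ l, x ∈ Pos := fun x hx => (hl x hx).1.1
        have hsne : l.sum ≠ 0 := h.sum_ne_zero l.length l rfl hlPos hlne
        have hνΔ := (hIfact ν hνI).1
        have h9 : l.sum = ν - γ := by rw [hνsum]; abel
        have hip : ⟪γ - ν, l.sum⟫ < 0 := by
          have h10 : γ - ν = -(ν - γ) := by abel
          rw [h9, h10, inner_neg_left]
          have hpos : 0 < ⟪ν - γ, ν - γ⟫ := by
            apply lt_of_le_of_ne real_inner_self_nonneg
            symm
            exact inner_self_ne_zero.mpr (h9 ▸ hsne)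
          linarith
        obtain ⟨σ, hσl, hσip⟩ := exists_inner_neg (γ - ν) l hip
        have hσ := hl σ hσl
        have hσ0 : σ ∈ pos0 d Pos := hσ.1
        have hσΔ : σ ∈ Δ := h.pos_subset hσ0.1
        have hdσ : d σ = 0 := hσ0.2
        have hwσ : w σ ∈ Pos := hW0 σ hσ0
        rw [inner_sub_left] at hσip
        have herase : l.sum = σ + (l.erase σ).sum := by
          rw [(List.perm_cons_erase hσl).sum_eq, List.sum_cons]
        have heraselen : (l.erase σ).length = m + 1 := by
          have h11 := List.length_erase_of_mem hσl
          have h12 : 1 ≤ l.length := List.length_pos_iff.mpr hlne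
          omega
        have herasemem : ∀ x ∈ l.erase σ, x ∈ simpleRoots (pos0 d Pos) :=
          fun x hx => hl x (List.mem_of_mem_erase hx)
        by_cases hγσ : ⟪γ, σ⟫ < 0
        · have hne : γ + σ ≠ 0 := by
            intro h0
            have h13 : σ = -γ := eq_neg_of_add_eq_zero_right h0
            have h14 : d σ = -1 := by rw [h13, h.grade_neg γ hγΔ, hdγ]
            omega
          have hγ'Δ : γ + σ ∈ Δ := h.root_add hγΔ hσΔ hγσ hne
          have hdγ' : d (γ + σ) = 1 := by
            rw [h.grade_add γ hγΔ σ hσΔ hγ'Δ, hdγ, hdσ]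
            ring
          have hle : leLevel d Pos (γ + σ) ν := by
            show ν - (γ + σ) ∈ _
            have h13 : ν - (γ + σ) = (l.erase σ).sum := by
              rw [hνsum, herase]; abel
            rw [h13]
            exact AddSubmonoid.list_sum_mem _
              (fun x hx => AddSubmonoid.subset_closure (herasemem x hx))
          have hγ'I : γ + σ ∈ I := hI.2 ν hνI (γ + σ) ⟨hγ'Δ, hdγ'⟩ hle
          apply hsimple.2
          refine ⟨-(w (γ + σ)), hIinv _ hγ'I, w σ, hwσ, ?_⟩
          rw [map_add]; abel
        · have hνσ : ⟪ν, -σ⟫ < 0 := by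
            rw [inner_neg_right]
            push_neg at hγσ
            linarith
          have hne : ν + -σ ≠ 0 := by
            intro h0
            rw [← sub_eq_add_neg] at h0
            have h13 : ν = σ := sub_eq_zero.mp h0
            have h14 : d ν = 0 := by rw [h13]; exact hdσ
            have h15 := (hIfact ν hνI).2
            omega
          have hν'Δ : ν - σ ∈ Δ := by
            have h13 := h.root_add hνΔ (h.neg_mem σ hσΔ) hνσ hne
            rwa [← sub_eq_add_neg] at h13
          have hdν' : d (ν - σ) = 1 := by
            have h13 : ν - σ = ν + -σ := sub_eq_add_neg ν σ
            rw [h13, h.grade_add ν hνΔ (-σ) (h.neg_mem σ hσΔ) (h13 ▸ hν'Δ),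
              (hIfact ν hνI).2, h.grade_neg σ hσΔ, hdσ]
            ring
          have hle : leLevel d Pos (ν - σ) ν := by
            show ν - (ν - σ) ∈ _
            have h13 : ν - (ν - σ) = σ := by abel
            rw [h13]
            exact AddSubmonoid.subset_closure (hl σ hσl)
          have hν'I : ν - σ ∈ I := hI.2 ν hνI (ν - σ) ⟨hν'Δ, hdν'⟩ hle
          refine ih (ν - σ) (l.erase σ) hν'I herasemem heraselen ?_
          rw [hνsum, herase]; abel
    intro ν hνI hle
    by_contra hne
    obtain ⟨l, hlmem, hlsum⟩ := mem_closure_list hle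
    have hlne : l ≠ [] := by
      intro h0
      rw [h0] at hlsum
      simp at hlsum
      exact hne (sub_eq_zero.mp hlsum.symm)
    obtain ⟨m, hm⟩ : ∃ m, l.length = m + 1 :=
      ⟨l.length - 1, by have := List.length_pos_iff.mpr hlne; omega⟩
    exact hC m ν l hνI hlmem hm (by rw [hlsum]; abel)
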